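/- Let n ∈ ℕ and let f, g be real-valued functions on ℝ, each n times differentiable. Then (1/n!) · Σ_{k=0}^{n} (-1)^k · C(n,k) · g^k · (f · g^{n-k})^{(n)} = f · (g')^n, i.e. Σ_{k=0}^{n} (-1)^k · C(n,k) · g^k · (f · g^{n-k})^{(n)} = n! · f · (g')^n, where C(n,k) is the binomial coefficient and h^{(n)} denotes the n-th derivative of h. -/

import Mathlib

open scoped BigOperators

-- helper: ContDiff for f * u^m
private lemma cd_mul_pow {n : ℕ} {f u : ℝ → ℝ} (hf : ContDiff ℝ (n : ℕ∞) f)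
    (hu : ContDiff ℝ (n : ℕ∞) u) (m : ℕ) :
    ContDiff ℝ (n : ℕ∞) (fun t => f t * u t ^ m) :=
  hf.mul (hu.pow m)

private lemma cd_deriv {n : ℕ} {f : ℝ → ℝ} (hf : ContDiff ℝ ((n+1 : ℕ) : ℕ∞) f) :
    ContDiff ℝ (n : ℕ∞) (deriv f) := by
  have : ContDiff ℝ ((n : WithTop ℕ∞) + 1) f := by exact_mod_cast hf
  exact (contDiff_succ_iff_deriv.mp this).2.2

private lemma iD_add {n : ℕ} {f g : ℝ → ℝ} (hf : ContDiff ℝ (n : ℕ∞) f)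
    (hg : ContDiff ℝ (n : ℕ∞) g) (x : ℝ) :
    iteratedDeriv n (fun t => f t + g t) x = iteratedDeriv n f x + iteratedDeriv n g x := by
  simp_rw [← iteratedDerivWithin_univ]
  exact iteratedDerivWithin_add (Set.mem_univ x) uniqueDiffOn_univ
    ((show ContDiff ℝ (n : WithTop ℕ∞) f by exact_mod_cast hf).contDiffWithinAt) ((show ContDiff ℝ (n : WithTop ℕ∞) g by exact_mod_cast hg).contDiffWithinAt)

private lemma deriv_mul_pow {n m : ℕ} {f u : ℝ → ℝ}
    (hf : ContDiff ℝ ((n+1 : ℕ) : ℕ∞) f) (hu : ContDiff ℝ ((n+1 : ℕ) : ℕ∞) u) :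
    deriv (fun t => f t * u t ^ (m+1)) =
      fun t => deriv f t * u t ^ (m+1) + ((m+1 : ℝ) * f t * deriv u t) * u t ^ m := by
  have hfd : Differentiable ℝ f := hf.differentiable (by simp)
  have hud : Differentiable ℝ u := hu.differentiable (by simp)
  funext t
  rw [deriv_fun_mul (hfd t) ((hud t).fun_pow _), deriv_fun_pow (hud t) _]
  push_cast
  ring

/-- if u x₀ = 0 and n < m then the n-th derivative of f * u^m vanishes at x₀ -/
private lemma iD_const_mul {n : ℕ} {f : ℝ → ℝ} (hf : ContDiff ℝ (n : ℕ∞) f) (c : ℝ) (x : ℝ) :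
    iteratedDeriv n (fun t => c * f t) x = c * iteratedDeriv n f x := by
  simp_rw [← iteratedDerivWithin_univ]
  exact iteratedDerivWithin_const_mul (Set.mem_univ x) uniqueDiffOn_univ c
    ((show ContDiff ℝ (n : WithTop ℕ∞) f by exact_mod_cast hf).contDiffWithinAt)

private lemma iD_zero_fun (n : ℕ) (x : ℝ) : iteratedDeriv n (fun _ : ℝ => (0:ℝ)) x = 0 := by
  have := iD_const_mul (n := n) (f := fun _ => (0:ℝ)) contDiff_const 0 x
  simpa using this

private lemma aux_zero (n : ℕ) : ∀ (m : ℕ) (f u : ℝ → ℝ), ContDiff ℝ (n : ℕ∞) f →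
    ContDiff ℝ (n : ℕ∞) u → ∀ x₀ : ℝ, u x₀ = 0 → n < m →
    iteratedDeriv n (fun t => f t * u t ^ m) x₀ = 0 := by
  induction n with
  | zero =>
    intro m f u hf hu x₀ hu0 hm
    obtain ⟨m, rfl⟩ := Nat.exists_eq_succ_of_ne_zero (show m ≠ 0 by omega)
    simp [hu0]
  | succ n IH =>
    intro m f u hf hu x₀ hu0 hm
    obtain ⟨m, rfl⟩ := Nat.exists_eq_succ_of_ne_zero (show m ≠ 0 by omega)
    rw [iteratedDeriv_succ', deriv_mul_pow hf hu]
    have hf' : ContDiff ℝ (n : ℕ∞) (deriv f) := cd_deriv hf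
    have hu' : ContDiff ℝ (n : ℕ∞) (deriv u) := cd_deriv hu
    have hfn : ContDiff ℝ (n : ℕ∞) f := hf.of_le (by exact_mod_cast Nat.le_succ n)
    have hun : ContDiff ℝ (n : ℕ∞) u := hu.of_le (by exact_mod_cast Nat.le_succ n)
    have h1 : ContDiff ℝ (n : ℕ∞) (fun t => deriv f t * u t ^ (m+1)) := hf'.mul (hun.pow _)
    have h2 : ContDiff ℝ (n : ℕ∞) (fun t => ((m+1 : ℝ) * f t * deriv u t) * u t ^ m) :=
      ((contDiff_const.mul hfn).mul hu').mul (hun.pow _)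
    rw [iD_add h1 h2 x₀,
      IH (m+1) _ _ hf' hun x₀ hu0 (Nat.lt_of_succ_lt hm),
      IH m _ _ ((contDiff_const.mul hfn).mul hu') hun x₀ hu0 (Nat.lt_of_succ_lt_succ hm),
      add_zero]

private lemma aux_eq (n : ℕ) : ∀ (f u : ℝ → ℝ), ContDiff ℝ (n : ℕ∞) f →
    ContDiff ℝ (n : ℕ∞) u → ∀ x₀ : ℝ, u x₀ = 0 →
    iteratedDeriv n (fun t => f t * u t ^ n) x₀
      = (n.factorial : ℝ) * f x₀ * (deriv u x₀) ^ n := by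
  induction n with
  | zero => intro f u hf hu x₀ hu0; simp
  | succ n IH =>
    intro f u hf hu x₀ hu0
    rw [iteratedDeriv_succ', deriv_mul_pow hf hu]
    have hf' : ContDiff ℝ (n : ℕ∞) (deriv f) := cd_deriv hf
    have hu' : ContDiff ℝ (n : ℕ∞) (deriv u) := cd_deriv hu
    have hfn : ContDiff ℝ (n : ℕ∞) f := hf.of_le (by exact_mod_cast Nat.le_succ n)
    have hun : ContDiff ℝ (n : ℕ∞) u := hu.of_le (by exact_mod_cast Nat.le_succ n)
    have h1 : ContDiff ℝ (n : ℕ∞) (fun t => deriv f t * u t ^ (n+1)) := hf'.mul (hun.pow _)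
    have h2 : ContDiff ℝ (n : ℕ∞) (fun t => ((n+1 : ℝ) * f t * deriv u t) * u t ^ n) :=
      ((contDiff_const.mul hfn).mul hu').mul (hun.pow _)
    rw [iD_add h1 h2 x₀,
      aux_zero n (n+1) _ _ hf' hun x₀ hu0 (Nat.lt_succ_self n),
      IH _ _ ((contDiff_const.mul hfn).mul hu') hun x₀ hu0,
      zero_add, Nat.factorial_succ]
    push_cast
    ring

theorem stmt_6 (n : ℕ) (f g : ℝ → ℝ)
    (hf : ContDiff ℝ (n : ℕ∞) f) (hg : ContDiff ℝ (n : ℕ∞) g) (x : ℝ) :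
    ∑ k ∈ Finset.range (n + 1),
      (-1 : ℝ) ^ k * (n.choose k : ℝ) * (g x) ^ k *
        iteratedDeriv n (fun t => f t * (g t) ^ (n - k)) x
      = (n.factorial : ℝ) * f x * (deriv g x) ^ n := by
  set c := g x with hc
  have hu : ContDiff ℝ (n : ℕ∞) (fun t => g t - c) := hg.sub contDiff_const
  have key := aux_eq n f (fun t => g t - c) hf hu x (by simp [hc])
  have hderiv : deriv (fun t => g t - c) x = deriv g x := by
    simp [deriv_sub_const]
  rw [hderiv] at key
  rw [← key]
  -- now expand (g t - c)^n binomially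
  have expand : (fun t => f t * (g t - c) ^ n) = fun t =>
      ∑ k ∈ Finset.range (n + 1),
        ((-1 : ℝ) ^ k * (n.choose k : ℝ) * c ^ k) * (f t * g t ^ (n - k)) := by
    funext t
    rw [sub_eq_neg_add, add_pow]
    rw [Finset.mul_sum]
    apply Finset.sum_congr rfl
    intro k hk
    ring
  rw [expand]
  -- iteratedDeriv of finite sum
  have : iteratedDeriv n (fun t =>
      ∑ k ∈ Finset.range (n + 1),
        ((-1 : ℝ) ^ k * (n.choose k : ℝ) * c ^ k) * (f t * g t ^ (n - k))) x
      = ∑ k ∈ Finset.range (n + 1),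
        ((-1 : ℝ) ^ k * (n.choose k : ℝ) * c ^ k) *
          iteratedDeriv n (fun t => f t * g t ^ (n - k)) x := by
    induction' (Finset.range (n+1)) using Finset.induction_on with a s ha IH2
    · simp only [Finset.sum_empty]
      exact iD_zero_fun n x
    · have hrest : ContDiff ℝ (n : ℕ∞) (fun t =>
        ∑ k ∈ s, ((-1 : ℝ) ^ k * (n.choose k : ℝ) * c ^ k) * (f t * g t ^ (n - k))) := by
        apply ContDiff.sum
        intro k _
        exact contDiff_const.mul (hf.mul (hg.pow _))
      have hone : ContDiff ℝ (n : ℕ∞) (fun t =>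
        ((-1 : ℝ) ^ a * (n.choose a : ℝ) * c ^ a) * (f t * g t ^ (n - a))) :=
        contDiff_const.mul (hf.mul (hg.pow _))
      simp only [Finset.sum_insert ha]
      rw [iD_add hone hrest x, IH2]
      congr 1
      exact iD_const_mul (hf.mul (hg.pow _)) _ x
  rw [this]
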